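/- Let G be symmetric positive definite with λI ⪯ G ⪯ ΛI, D of full column rank q, Y = GD and Δ = (DᵀY)⁻¹. Then ‖DΔDᵀ‖₂ ≤ 1/λ, ‖YΔYᵀ‖₂ ≤ Λ, and ‖YΔDᵀ‖₂ ≤ √(Λ/λ). -/

import Mathlib

open Matrix

/-- The spectral (operator 2-) norm of a square real matrix. -/
noncomputable def specNorm {d : ℕ} (A : Matrix (Fin d) (Fin d) ℝ) : ℝ :=
  ‖Matrix.toEuclideanCLM (𝕜 := ℝ) A‖

namespace SketchAux

variable {d : ℕ}

lemma specNorm_nonneg (A : Matrix (Fin d) (Fin d) ℝ) : 0 ≤ specNorm A := norm_nonneg _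

lemma specNorm_mul_le (A B : Matrix (Fin d) (Fin d) ℝ) :
    specNorm (A * B) ≤ specNorm A * specNorm B := by
  show ‖Matrix.toEuclideanCLM (𝕜 := ℝ) (A * B)‖ ≤ _
  rw [_root_.map_mul]
  exact norm_mul_le _ _

lemma mulVec_dot {m n : ℕ} (M : Matrix (Fin m) (Fin n) ℝ) (u : Fin n → ℝ) (v : Fin m → ℝ) :
    u ⬝ᵥ (Mᵀ *ᵥ v) = (M *ᵥ u) ⬝ᵥ v := by
  rw [dotProduct_mulVec, vecMul_transpose]

lemma norm_symm_sq (w : Fin d → ℝ) :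
    ‖(WithLp.equiv 2 (Fin d → ℝ)).symm w‖ ^ 2 = w ⬝ᵥ w := by
  rw [EuclideanSpace.norm_eq, Real.sq_sqrt (by positivity)]
  simp [dotProduct, sq]

lemma mulVec_norm_bound (A : Matrix (Fin d) (Fin d) ℝ) (c : ℝ) (hc : 0 ≤ c)
    (h : ∀ x : Fin d → ℝ, (A *ᵥ x) ⬝ᵥ (A *ᵥ x) ≤ c ^ 2 * (x ⬝ᵥ x)) : specNorm A ≤ c := by
  show ‖Matrix.toEuclideanCLM (𝕜 := ℝ) A‖ ≤ c
  apply ContinuousLinearMap.opNorm_le_bound _ hc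
  intro x
  set v : Fin d → ℝ := WithLp.equiv 2 (Fin d → ℝ) x with hv
  have hx : x = (WithLp.equiv 2 (Fin d → ℝ)).symm v := rfl
  have happ : Matrix.toEuclideanCLM (𝕜 := ℝ) A x = (WithLp.equiv 2 (Fin d → ℝ)).symm (A *ᵥ v) := by
    rw [hx, WithLp.equiv_symm_apply, Matrix.toEuclideanCLM_toLp]
  rw [happ]
  have h1 : ‖(WithLp.equiv 2 (Fin d → ℝ)).symm (A *ᵥ v)‖ ^ 2 ≤ (c * ‖x‖) ^ 2 := by
    rw [norm_symm_sq, mul_pow, hx, norm_symm_sq]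
    exact h v
  calc ‖(WithLp.equiv 2 (Fin d → ℝ)).symm (A *ᵥ v)‖
      = Real.sqrt (‖(WithLp.equiv 2 (Fin d → ℝ)).symm (A *ᵥ v)‖ ^ 2) :=
        (Real.sqrt_sq (norm_nonneg _)).symm
    _ ≤ Real.sqrt ((c * ‖x‖) ^ 2) := Real.sqrt_le_sqrt h1
    _ = c * ‖x‖ := Real.sqrt_sq (by positivity)

end SketchAux

namespace SketchAux

lemma proj_quad {d : ℕ} (P : Matrix (Fin d) (Fin d) ℝ) (hP : Pᵀ * P = P) (x : Fin d → ℝ) :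
    (P *ᵥ x) ⬝ᵥ (P *ᵥ x) ≤ x ⬝ᵥ x := by
  have hsym : ∀ (M : Matrix (Fin d) (Fin d) ℝ), Mᵀ * M = M →
      (M *ᵥ x) ⬝ᵥ (M *ᵥ x) = x ⬝ᵥ (M *ᵥ x) := by
    intro M hM
    rw [← mulVec_dot M x (M *ᵥ x), mulVec_mulVec, hM]
  have hPs : Pᵀ = P := by
    calc Pᵀ = (Pᵀ * P)ᵀ := by rw [hP]
      _ = Pᵀ * P := by rw [transpose_mul, transpose_transpose]
      _ = P := hP
  have hPP : P * P = P := by rw [hPs] at hP; exact hP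
  have hQ : (1 - P)ᵀ * (1 - P) = 1 - P := by
    rw [transpose_sub, transpose_one, hPs, sub_mul, one_mul, mul_sub, mul_one, hPP]
    simp
  have h1 := hsym P (by rw [hPs]; exact hPP)
  have h2 := hsym _ hQ
  have h3 : 0 ≤ ((1 - P) *ᵥ x) ⬝ᵥ ((1 - P) *ᵥ x) := by
    have := dotProduct_star_self_nonneg ((1 - P) *ᵥ x)
    simpa using this
  have h4 : x ⬝ᵥ ((1 - P) *ᵥ x) = x ⬝ᵥ x - x ⬝ᵥ (P *ᵥ x) := by
    rw [sub_mulVec, one_mulVec, dotProduct_sub]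
  rw [h1]
  rw [h2, h4] at h3
  linarith

end SketchAux

open SketchAux

/-- If `λI ⪯ G ⪯ ΛI` with `G` symmetric, `D` of full column rank, `Y = GD`,
`Δ = (DᵀY)⁻¹`, then `‖DΔDᵀ‖₂ ≤ 1/λ`, `‖YΔYᵀ‖₂ ≤ Λ` and `‖YΔDᵀ‖₂ ≤ √(Λ/λ)`. -/
theorem sketch_norm_bounds {d q : ℕ} (lam Lam : ℝ) (hlam : 0 < lam) (hll : lam ≤ Lam)
    (G : Matrix (Fin d) (Fin d) ℝ) (hGsym : G.IsSymm)
    (hlo : (G - lam • (1 : Matrix (Fin d) (Fin d) ℝ)).PosSemidef)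
    (hhi : ((Lam • (1 : Matrix (Fin d) (Fin d) ℝ)) - G).PosSemidef)
    (D : Matrix (Fin d) (Fin q) ℝ) (hD : D.rank = q) :
    let Y := G * D
    let Δ := (Dᵀ * Y)⁻¹
    specNorm (D * Δ * Dᵀ) ≤ 1 / lam ∧
    specNorm (Y * Δ * Yᵀ) ≤ Lam ∧
    specNorm (Y * Δ * Dᵀ) ≤ Real.sqrt (Lam / lam) := by
  intro Y Δ
  have hYdef : Y = G * D := rfl
  have hΔdef : Δ = (Dᵀ * (G * D))⁻¹ := rfl
  clear_value Y Δ
  -- G is positive definite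
  have hsm : (lam • (1 : Matrix (Fin d) (Fin d) ℝ)).PosDef := by
    refine Matrix.posDef_iff_dotProduct_mulVec.mpr ⟨?_, fun x hx => ?_⟩
    · simp [Matrix.IsHermitian]
    · have hxx : 0 < x ⬝ᵥ x := by
        have := (dotProduct_star_self_pos_iff (v := x)).mpr hx
        simpa using this
      simp only [smul_mulVec, one_mulVec, dotProduct_smul, star_trivial, smul_eq_mul]
      exact mul_pos hlam hxx
  have hGpd : G.PosDef := by
    have h := Matrix.PosDef.posSemidef_add hlo hsm
    rwa [sub_add_cancel] at h
  -- D has trivial kernel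
  have hDinj : ∀ x : Fin q → ℝ, x ≠ 0 → D *ᵥ x ≠ 0 := by
    intro x hx hx0
    have hker : LinearMap.ker D.mulVecLin = ⊥ := by
      have hrn := LinearMap.finrank_range_add_finrank_ker D.mulVecLin
      have hfin : Module.finrank ℝ (Fin q → ℝ) = q := by simp
      rw [hfin] at hrn
      have hrk : Module.finrank ℝ (LinearMap.range D.mulVecLin) = q := hD
      rw [hrk] at hrn
      have hz : Module.finrank ℝ (LinearMap.ker D.mulVecLin) = 0 := by omega
      exact Submodule.finrank_eq_zero.mp hz
    have hinj : Function.Injective D.mulVecLin := LinearMap.ker_eq_bot.mp hker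
    exact hx (hinj (by simpa [Matrix.mulVecLin_apply] using hx0))
  -- N := DᵀGD is positive definite
  have hN : (Dᵀ * (G * D)).PosDef := by
    refine Matrix.posDef_iff_dotProduct_mulVec.mpr ⟨?_, fun x hx => ?_⟩
    · show (Dᵀ * (G * D))ᴴ = _
      rw [conjTranspose_eq_transpose_of_trivial, transpose_mul, transpose_mul,
        transpose_transpose, hGsym.eq, Matrix.mul_assoc]
    · have h1 : (Dᵀ * (G * D)) *ᵥ x = Dᵀ *ᵥ (G *ᵥ (D *ᵥ x)) := by
        rw [← mulVec_mulVec, ← mulVec_mulVec]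
      rw [star_trivial, h1, mulVec_dot]
      have := hGpd.dotProduct_mulVec_pos (hDinj x hx)
      simpa using this
  have hNdet : IsUnit (Dᵀ * (G * D)).det := hN.det_pos.ne'.isUnit
  have hΔN : Δ * (Dᵀ * (G * D)) = 1 := by rw [hΔdef]; exact nonsing_inv_mul _ hNdet
  have hΔT : Δᵀ = Δ := by
    rw [hΔdef, ← conjTranspose_eq_transpose_of_trivial]
    exact hN.isHermitian.inv
  -- a symmetric square root S of G
  obtain ⟨S, hSS, hSsym⟩ : ∃ S : Matrix (Fin d) (Fin d) ℝ, S * S = G ∧ Sᵀ = S := by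
    open scoped MatrixOrder in
    refine ⟨CFC.sqrt G, CFC.sqrt_mul_sqrt_self G hGpd.posSemidef.nonneg, ?_⟩
    rw [← conjTranspose_eq_transpose_of_trivial]
    open scoped MatrixOrder in
    exact (CFC.sqrt_nonneg G).posSemidef.isHermitian
  have hSdetU : IsUnit S.det := by
    have hdd : S.det * S.det = G.det := by rw [← det_mul, hSS]
    have hg := hGpd.det_pos
    have hne : S.det ≠ 0 := by
      intro h0
      rw [h0, mul_zero] at hdd
      exact absurd hdd.symm (ne_of_gt hg)
    exact hne.isUnit
  have hS1 : S * S⁻¹ = 1 := mul_nonsing_inv _ hSdetU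
  have hS2 : S⁻¹ * S = 1 := nonsing_inv_mul _ hSdetU
  obtain ⟨E, hEdef⟩ : ∃ E : Matrix (Fin d) (Fin q) ℝ, E = S * D := ⟨_, rfl⟩
  have hET : Eᵀ = Dᵀ * S := by rw [hEdef, transpose_mul, hSsym]
  have hE1 : S⁻¹ * E = D := by rw [hEdef, ← Matrix.mul_assoc, hS2, Matrix.one_mul]
  have hE2 : Eᵀ * S⁻¹ = Dᵀ := by rw [hET, Matrix.mul_assoc, hS1, Matrix.mul_one]
  have hEE : Eᵀ * E = Dᵀ * (G * D) := by
    rw [hET, hEdef, Matrix.mul_assoc, ← Matrix.mul_assoc S S D, hSS]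
  have hYS : Y = S * E := by rw [hYdef, hEdef, ← Matrix.mul_assoc, hSS]
  have hYT : Yᵀ = Eᵀ * S := by rw [hYS, transpose_mul, hSsym]
  -- the projection P = E Δ Eᵀ
  have hPsymm : (E * Δ * Eᵀ)ᵀ = E * Δ * Eᵀ := by
    rw [transpose_mul, transpose_mul, transpose_transpose, hΔT, Matrix.mul_assoc]
  have hproj : (E * Δ * Eᵀ)ᵀ * (E * Δ * Eᵀ) = E * Δ * Eᵀ := by
    rw [hPsymm]
    calc E * Δ * Eᵀ * (E * Δ * Eᵀ) = E * (Δ * (Eᵀ * E) * Δ) * Eᵀ := by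
          simp only [Matrix.mul_assoc]
      _ = E * (Δ * (Dᵀ * (G * D)) * Δ) * Eᵀ := by rw [hEE]
      _ = E * Δ * Eᵀ := by rw [hΔN, Matrix.one_mul, Matrix.mul_assoc]
  -- spectral norm bounds for the three factors
  have hLam0 : (0 : ℝ) ≤ Lam := le_trans hlam.le hll
  have hGq : ∀ x : Fin d → ℝ, (S *ᵥ x) ⬝ᵥ (S *ᵥ x) = x ⬝ᵥ (G *ᵥ x) := by
    intro x
    rw [← mulVec_dot S x (S *ᵥ x), hSsym, mulVec_mulVec, hSS]
  have nS : specNorm S ≤ Real.sqrt Lam := by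
    apply mulVec_norm_bound _ _ (Real.sqrt_nonneg _)
    intro x
    have h2 := hhi.dotProduct_mulVec_nonneg x
    simp only [star_trivial, sub_mulVec, smul_mulVec, one_mulVec, dotProduct_sub,
      dotProduct_smul, smul_eq_mul] at h2
    rw [hGq x, Real.sq_sqrt hLam0]
    linarith
  have nSinv : specNorm S⁻¹ ≤ (Real.sqrt lam)⁻¹ := by
    apply mulVec_norm_bound _ _ (by positivity)
    intro x
    have hSy : S *ᵥ (S⁻¹ *ᵥ x) = x := by rw [mulVec_mulVec, hS1, one_mulVec]
    have h2 := hlo.dotProduct_mulVec_nonneg (S⁻¹ *ᵥ x)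
    simp only [star_trivial, sub_mulVec, smul_mulVec, one_mulVec, dotProduct_sub,
      dotProduct_smul, smul_eq_mul] at h2
    have h3 : (S⁻¹ *ᵥ x) ⬝ᵥ (G *ᵥ (S⁻¹ *ᵥ x)) = x ⬝ᵥ x := by
      rw [← hGq (S⁻¹ *ᵥ x), hSy]
    have h4 : lam * ((S⁻¹ *ᵥ x) ⬝ᵥ (S⁻¹ *ᵥ x)) ≤ x ⬝ᵥ x := by linarith
    have h5 := mul_le_mul_of_nonneg_left h4 (inv_nonneg.mpr hlam.le)
    rw [← mul_assoc, inv_mul_cancel₀ hlam.ne', one_mul] at h5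
    rw [show ((Real.sqrt lam)⁻¹) ^ 2 = lam⁻¹ by
      rw [← Real.sqrt_inv, Real.sq_sqrt (inv_nonneg.mpr hlam.le)]]
    exact h5
  have nP : specNorm (E * Δ * Eᵀ) ≤ 1 := by
    apply mulVec_norm_bound _ _ zero_le_one
    intro x
    rw [one_pow, one_mul]
    exact proj_quad _ hproj x
  -- the three matrix identities
  have key1 : D * Δ * Dᵀ = S⁻¹ * (E * Δ * Eᵀ) * S⁻¹ := by
    rw [← hE2, ← hE1]; simp only [Matrix.mul_assoc]
  have key2 : Y * Δ * Yᵀ = S * (E * Δ * Eᵀ) * S := by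
    rw [hYT, hYS]; simp only [Matrix.mul_assoc]
  have key3 : Y * Δ * Dᵀ = S * (E * Δ * Eᵀ) * S⁻¹ := by
    rw [← hE2, hYS]; simp only [Matrix.mul_assoc]
  have comb : ∀ (A B C : Matrix (Fin d) (Fin d) ℝ) (a b c : ℝ), specNorm A ≤ a →
      specNorm B ≤ b → specNorm C ≤ c → 0 ≤ a → 0 ≤ c →
      specNorm (A * B * C) ≤ a * b * c := by
    intro A B C a b c ha hb hc ha0 hc0
    have hb0 : 0 ≤ b := le_trans (specNorm_nonneg _) hb
    calc specNorm (A * B * C) ≤ specNorm (A * B) * specNorm C := specNorm_mul_le _ _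
      _ ≤ (specNorm A * specNorm B) * specNorm C :=
          mul_le_mul_of_nonneg_right (specNorm_mul_le _ _) (specNorm_nonneg _)
      _ ≤ a * b * c := by
          apply mul_le_mul (mul_le_mul ha hb (specNorm_nonneg _) ha0) hc (specNorm_nonneg _)
          positivity
  refine ⟨?_, ?_, ?_⟩
  · rw [key1]
    calc specNorm (S⁻¹ * (E * Δ * Eᵀ) * S⁻¹)
        ≤ (Real.sqrt lam)⁻¹ * 1 * (Real.sqrt lam)⁻¹ :=
          comb _ _ _ _ _ _ nSinv nP nSinv (by positivity) (by positivity)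
      _ = 1 / lam := by rw [mul_one, ← mul_inv, Real.mul_self_sqrt hlam.le, one_div]
  · rw [key2]
    calc specNorm (S * (E * Δ * Eᵀ) * S)
        ≤ Real.sqrt Lam * 1 * Real.sqrt Lam :=
          comb _ _ _ _ _ _ nS nP nS (Real.sqrt_nonneg _) (Real.sqrt_nonneg _)
      _ = Lam := by rw [mul_one, Real.mul_self_sqrt hLam0]
  · rw [key3]
    calc specNorm (S * (E * Δ * Eᵀ) * S⁻¹)
        ≤ Real.sqrt Lam * 1 * (Real.sqrt lam)⁻¹ :=
          comb _ _ _ _ _ _ nS nP nSinv (Real.sqrt_nonneg _) (by positivity)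
      _ = Real.sqrt (Lam / lam) := by
          rw [mul_one, Real.sqrt_div hLam0, div_eq_mul_inv]
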